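/- If C and D are uniquely decipherable codes with D finer than C (every word of C is a concatenation of words of D), then K(C) ≤ K(D). -/

import Mathlib

open Finset Pointwise

instance {A : Type*} [DecidableEq A] : DecidableEq (FreeMonoid A) :=
  inferInstanceAs (DecidableEq (List A))

/-- A code `C` is uniquely decipherable: the concatenation (product) map is
injective on finite sequences of words from `C`. -/
def IsUD {A : Type*} (C : Finset (FreeMonoid A)) : Prop :=
  ∀ l₁ l₂ : List (FreeMonoid A), (∀ w ∈ l₁, w ∈ C) → (∀ w ∈ l₂, w ∈ C) →
    l₁.prod = l₂.prod → l₁ = l₂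

/-- The Kraft sum of a code over an alphabet of size `r`. -/
noncomputable def Kraft {A : Type*} (r : ℕ) (C : Finset (FreeMonoid A)) : ℝ :=
  ∑ x ∈ C, (r : ℝ) ^ (-(x.length : ℤ))

/-- `D` is finer than `C` (refines `C`): every word of `C` is the concatenation
of a nonempty finite sequence of words from `D`. -/
def Refines {A : Type*} (C D : Finset (FreeMonoid A)) : Prop :=
  ∀ w ∈ C, ∃ l : List (FreeMonoid A), l ≠ [] ∧ (∀ v ∈ l, v ∈ D) ∧ l.prod = w

section Aux

variable {α : Type*} [DecidableEq α]

/-- All lists of length `n` with entries in `E`. -/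
def tuples (E : Finset α) : ℕ → Finset (List α)
  | 0 => {([] : List α)}
  | n + 1 => (E ×ˢ tuples E n).image fun p => p.1 :: p.2

lemma cons_inj : Function.Injective (fun p : α × List α => p.1 :: p.2) := by
  rintro ⟨a, t⟩ ⟨b, s⟩ h
  simpa [Prod.ext_iff] using h

lemma mem_tuples {E : Finset α} : ∀ {n : ℕ} {l : List α},
    l ∈ tuples E n ↔ l.length = n ∧ ∀ w ∈ l, w ∈ E := by
  intro n
  induction n with
  | zero =>
    intro l
    simp only [tuples, mem_singleton]
    constructor
    · rintro rfl; simp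
    · rintro ⟨h, -⟩; exact List.length_eq_zero_iff.mp h
  | succ n ih =>
    intro l
    simp only [tuples, mem_image, mem_product, Prod.exists]
    constructor
    · rintro ⟨a, t, ⟨ha, ht⟩, rfl⟩
      obtain ⟨hlen, hmem⟩ := ih.mp ht
      refine ⟨by simp [hlen], ?_⟩
      intro w hw
      rcases List.mem_cons.mp hw with rfl | hw
      · exact ha
      · exact hmem w hw
    · rintro ⟨hlen, hmem⟩
      cases l with
      | nil => simp at hlen
      | cons a t =>
        exact ⟨a, t, ⟨hmem a (List.mem_cons_self),
          ih.mpr ⟨by simpa using hlen, fun w hw => hmem w (List.mem_cons_of_mem _ hw)⟩⟩, rfl⟩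

lemma card_tuples (E : Finset α) : ∀ n : ℕ, (tuples E n).card = E.card ^ n
  | 0 => by simp [tuples]
  | n + 1 => by
    rw [tuples, Finset.card_image_of_injective _ cons_inj, Finset.card_product,
      card_tuples E n, pow_succ']

end Aux

section FM

variable {A : Type*} [Fintype A] [DecidableEq A]

lemma length_list_prod (l : List (FreeMonoid A)) :
    l.prod.length = (l.map FreeMonoid.length).sum := by
  induction l with
  | nil => simp
  | cons a t ih => simp [FreeMonoid.length_mul, ih]

lemma sum_tuples_kraft {r : ℕ} (hr : 0 < r) (E : Finset (FreeMonoid A)) :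
    ∀ n : ℕ, ∑ l ∈ tuples E n, (r : ℝ) ^ (-(l.prod.length : ℤ)) = (Kraft r E) ^ n := by
  have hr0 : (r : ℝ) ≠ 0 := Nat.cast_ne_zero.mpr hr.ne'
  intro n
  induction n with
  | zero => simp [tuples]
  | succ n ih =>
    rw [tuples, Finset.sum_image (fun p _ q _ h => cons_inj h)]
    have : ∀ p ∈ E ×ˢ tuples E n,
        (r : ℝ) ^ (-(((p.1 :: p.2 : List (FreeMonoid A)).prod).length : ℤ)) =
          (r : ℝ) ^ (-(p.1.length : ℤ)) * (r : ℝ) ^ (-(p.2.prod.length : ℤ)) := by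
      intro p _
      rw [List.prod_cons, FreeMonoid.length_mul, ← zpow_add₀ hr0]
      push_cast
      ring_nf
    rw [Finset.sum_congr rfl this, Finset.sum_product]
    simp_rw [← Finset.mul_sum, ← Finset.sum_mul, ih]
    rw [Kraft, pow_succ']

lemma kraft_nonneg (r : ℕ) (E : Finset (FreeMonoid A)) : 0 ≤ Kraft r E :=
  Finset.sum_nonneg fun x _ => zpow_nonneg (Nat.cast_nonneg r) _

/-- If `a ^ n` grows at most linearly, then `a ≤ 1`. -/
lemma le_one_of_pow_le_linear {a B : ℝ} (ha : 0 ≤ a)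
    (h : ∀ n : ℕ, 1 ≤ n → a ^ n ≤ B * n) : a ≤ 1 := by
  by_contra hlt
  push_neg at hlt
  set x := a - 1 with hx
  have hx0 : 0 < x := by linarith
  obtain ⟨m, hm⟩ := exists_nat_gt (max 1 (2 * B / x ^ 2))
  have hm1 : 1 ≤ m := by
    by_contra hm1
    interval_cases m
    · simp at hm
      exact absurd hm.1 (by norm_num)
  have hmx : 2 * B < m * x ^ 2 := by
    have := (div_lt_iff₀ (by positivity : (0 : ℝ) < x ^ 2)).mp
      (lt_of_le_of_lt (le_max_right _ _) hm)
    linarith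
  have key : a ^ (m * 2) ≤ B * (m * 2) := by
    have := h (m * 2) (by omega)
    simpa using this
  have bern : 1 + (m : ℝ) * x ≤ (1 + x) ^ m := one_add_mul_le_pow (by linarith) m
  have ha1x : a = 1 + x := by ring
  have hmx0 : (0 : ℝ) ≤ (m : ℝ) * x := by positivity
  have hsq : ((m : ℝ) * x) ^ 2 ≤ a ^ (m * 2) := by
    rw [pow_mul, ha1x]
    calc ((m : ℝ) * x) ^ 2 ≤ (1 + (m : ℝ) * x) ^ 2 := by nlinarith
      _ ≤ ((1 + x) ^ m) ^ 2 := by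
          apply pow_le_pow_left₀ (by linarith) bern
  have hm0 : (1 : ℝ) ≤ (m : ℝ) := by exact_mod_cast hm1
  nlinarith [hsq, key, hmx, hm0]

/-- Kraft–McMillan: a uniquely decipherable code has Kraft sum at most 1. -/
lemma kraft_le_one (hr : 1 ≤ Fintype.card A) (D : Finset (FreeMonoid A))
    (hD : (1 : FreeMonoid A) ∉ D) (hUDD : IsUD D) :
    Kraft (Fintype.card A) D ≤ 1 := by
  classical
  set r := Fintype.card A with hrdef
  have hr0 : 0 < r := hr
  have hrR : (0 : ℝ) < (r : ℝ) := by exact_mod_cast hr0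
  set L := 1 ⊔ D.sup FreeMonoid.length with hL
  have hL1 : 1 ≤ L := le_max_left _ _
  apply le_one_of_pow_le_linear (kraft_nonneg _ _)
  intro n hn
  rw [← sum_tuples_kraft hr0 D n]
  -- length bounds for products
  have hlow : ∀ l ∈ tuples D n, n ≤ l.prod.length := by
    intro l hl
    obtain ⟨hlen, hmem⟩ := mem_tuples.mp hl
    rw [length_list_prod, ← hlen, ← List.length_map (as := l) FreeMonoid.length]
    apply List.length_le_sum_of_one_le
    intro i hi
    obtain ⟨w, hw, rfl⟩ := List.mem_map.mp hi
    have : w ≠ 1 := fun h => hD (h ▸ hmem w hw)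
    have := FreeMonoid.length_eq_zero.not.mpr this
    omega
  have hhigh : ∀ l ∈ tuples D n, l.prod.length ≤ n * L := by
    intro l hl
    obtain ⟨hlen, hmem⟩ := mem_tuples.mp hl
    rw [length_list_prod]
    calc (l.map FreeMonoid.length).sum ≤ (l.map FreeMonoid.length).length • L := by
          apply List.sum_le_card_nsmul
          intro x hx
          obtain ⟨w, hw, rfl⟩ := List.mem_map.mp hx
          exact le_trans (Finset.le_sup (hmem w hw)) (le_max_right _ _)
      _ = n * L := by rw [List.length_map, hlen]; simp [mul_comm]
  have hmaps : ∀ l ∈ tuples D n, l.prod.length ∈ Finset.Icc 1 (n * L) := by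
    intro l hl
    exact Finset.mem_Icc.mpr ⟨le_trans hn (hlow l hl), hhigh l hl⟩
  rw [← Finset.sum_fiberwise_of_maps_to hmaps]
  have hinner : ∀ ℓ ∈ Finset.Icc 1 (n * L),
      ∑ l ∈ (tuples D n).filter (fun l => l.prod.length = ℓ),
        (r : ℝ) ^ (-(l.prod.length : ℤ)) ≤ 1 := by
    intro ℓ hℓ
    have hcard : ((tuples D n).filter (fun l => l.prod.length = ℓ)).card ≤ r ^ ℓ := by
      have := Finset.card_le_card_of_injOn
        (f := fun l : List (FreeMonoid A) => FreeMonoid.toList l.prod)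
        (s := (tuples D n).filter (fun l => l.prod.length = ℓ))
        (t := tuples (Finset.univ : Finset A) ℓ)
        (fun l hl => by
          obtain ⟨hl, hlen⟩ := Finset.mem_filter.mp hl
          exact mem_tuples.mpr ⟨hlen, fun _ _ => Finset.mem_univ _⟩)
        (fun l₁ h₁ l₂ h₂ h => by
          obtain ⟨h₁, -⟩ := Finset.mem_filter.mp h₁
          obtain ⟨h₂, -⟩ := Finset.mem_filter.mp h₂
          exact hUDD l₁ l₂ (mem_tuples.mp h₁).2 (mem_tuples.mp h₂).2
            (FreeMonoid.toList.injective h))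
      rwa [card_tuples, Finset.card_univ] at this
    calc ∑ l ∈ (tuples D n).filter (fun l => l.prod.length = ℓ),
          (r : ℝ) ^ (-(l.prod.length : ℤ))
        = ∑ l ∈ (tuples D n).filter (fun l => l.prod.length = ℓ), (r : ℝ) ^ (-(ℓ : ℤ)) := by
          apply Finset.sum_congr rfl
          intro l hl
          rw [(Finset.mem_filter.mp hl).2]
      _ = ((tuples D n).filter (fun l => l.prod.length = ℓ)).card * (r : ℝ) ^ (-(ℓ : ℤ)) := by
          rw [Finset.sum_const, nsmul_eq_mul]
      _ ≤ (r : ℝ) ^ ℓ * (r : ℝ) ^ (-(ℓ : ℤ)) := by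
          apply mul_le_mul_of_nonneg_right _ (zpow_nonneg hrR.le _)
          calc (((tuples D n).filter (fun l => l.prod.length = ℓ)).card : ℝ)
              ≤ ((r ^ ℓ : ℕ) : ℝ) := by exact_mod_cast hcard
            _ = (r : ℝ) ^ ℓ := by push_cast; ring
      _ = 1 := by
          rw [← zpow_natCast (r : ℝ) ℓ, ← zpow_add₀ hrR.ne']
          simp
  calc ∑ ℓ ∈ Finset.Icc 1 (n * L),
        ∑ l ∈ (tuples D n).filter (fun l => l.prod.length = ℓ),
          (r : ℝ) ^ (-(l.prod.length : ℤ))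
      ≤ ∑ _ℓ ∈ Finset.Icc 1 (n * L), (1 : ℝ) := Finset.sum_le_sum hinner
    _ = (Finset.Icc 1 (n * L)).card := by rw [Finset.sum_const, nsmul_eq_mul, mul_one]
    _ ≤ (L : ℝ) * n := by
        rw [Nat.card_Icc]
        have : n * L + 1 - 1 = n * L := by omega
        rw [this]
        push_cast
        nlinarith [hL1, hn]

end FM

theorem stmt_8 {A : Type*} [Fintype A] [DecidableEq A]
    (hr : 1 ≤ Fintype.card A)
    (C D : Finset (FreeMonoid A)) (hC : (1 : FreeMonoid A) ∉ C)
    (hD : (1 : FreeMonoid A) ∉ D) (hUDC : IsUD C) (hUDD : IsUD D)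
    (hle : Refines C D) :
    Kraft (Fintype.card A) C ≤ Kraft (Fintype.card A) D := by
  classical
  set r := Fintype.card A with hrdef
  have hr0 : 0 < r := hr
  have hrR : (0 : ℝ) < (r : ℝ) := by exact_mod_cast hr0
  rcases C.eq_empty_or_nonempty with hCe | ⟨w₀, hw₀⟩
  · rw [hCe]
    simpa [Kraft] using kraft_nonneg r D
  -- choose factorizations
  have fac : ∀ w, ∃ l : List (FreeMonoid A),
      (w ∈ C → (l ≠ [] ∧ (∀ v ∈ l, v ∈ D) ∧ l.prod = w)) := by
    intro w
    by_cases h : w ∈ C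
    · obtain ⟨l, hl⟩ := hle w h
      exact ⟨l, fun _ => hl⟩
    · exact ⟨[], fun hw => absurd hw h⟩
  choose f hf using fac
  have hfne : ∀ w ∈ C, f w ≠ [] := fun w hw => (hf w hw).1
  have hfD : ∀ w ∈ C, ∀ v ∈ f w, v ∈ D := fun w hw => (hf w hw).2.1
  have hfprod : ∀ w ∈ C, (f w).prod = w := fun w hw => (hf w hw).2.2
  -- D nonempty, Kraft D positive
  have hDne : D.Nonempty := by
    obtain ⟨v, hv⟩ := List.exists_mem_of_ne_nil _ (hfne w₀ hw₀)
    exact ⟨v, hfD w₀ hw₀ v hv⟩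
  have hKD_pos : 0 < Kraft r D := by
    obtain ⟨v, hv⟩ := hDne
    exact Finset.sum_pos' (fun x _ => zpow_nonneg hrR.le _)
      ⟨v, hv, zpow_pos hrR _⟩
  have hKD1 : Kraft r D ≤ 1 := kraft_le_one hr D hD hUDD
  set M := 1 ⊔ C.sup (fun w => (f w).length) with hM
  have hM1 : 1 ≤ M := le_max_left _ _
  have hfM : ∀ w ∈ C, (f w).length ≤ M := fun w hw =>
    le_trans (Finset.le_sup (f := fun w => (f w).length) hw)
      (le_max_right 1 (C.sup fun w => (f w).length))
  have hf1 : ∀ w ∈ C, 1 ≤ (f w).length := by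
    intro w hw
    have := hfne w hw
    cases h : f w with
    | nil => exact absurd h this
    | cons a t => simp [h]
  -- key inequality
  have key : ∀ n : ℕ, 1 ≤ n → (Kraft r C) ^ n ≤ (M : ℝ) * n * (Kraft r D) ^ n := by
    intro n hn
    set φ : List (FreeMonoid A) → List (FreeMonoid A) := fun l => (l.map f).flatten with hφ
    have hprodφ : ∀ l : List (FreeMonoid A), (∀ w ∈ l, w ∈ C) → (φ l).prod = l.prod := by
      intro l hl
      rw [hφ]
      simp only [List.prod_flatten, List.map_map]
      congr 1
      calc (l.map (List.prod ∘ f)) = l.map id := by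
            apply List.map_congr_left
            intro w hw
            exact hfprod w (hl w hw)
        _ = l := List.map_id l
    have hlenφ : ∀ l : List (FreeMonoid A), (φ l).length = (l.map fun w => (f w).length).sum := by
      intro l
      rw [hφ]
      simp [List.length_flatten, List.map_map, Function.comp_def]
    have hmaps : ∀ l ∈ tuples C n, φ l ∈ (Finset.Icc n (n * M)).biUnion (tuples D) := by
      intro l hl
      obtain ⟨hlen, hmem⟩ := mem_tuples.mp hl
      refine Finset.mem_biUnion.mpr ⟨(φ l).length, ?_, ?_⟩
      · refine Finset.mem_Icc.mpr ⟨?_, ?_⟩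
        · rw [hlenφ, ← hlen, ← List.length_map (as := l) (fun w => (f w).length)]
          apply List.length_le_sum_of_one_le
          intro i hi
          obtain ⟨w, hw, rfl⟩ := List.mem_map.mp hi
          exact hf1 w (hmem w hw)
        · rw [hlenφ]
          calc (l.map fun w => (f w).length).sum
              ≤ (l.map fun w => (f w).length).length • M := by
                apply List.sum_le_card_nsmul
                intro x hx
                obtain ⟨w, hw, rfl⟩ := List.mem_map.mp hx
                exact hfM w (hmem w hw)
            _ = n * M := by rw [List.length_map, hlen]; simp
      · refine mem_tuples.mpr ⟨rfl, ?_⟩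
        intro v hv
        rw [hφ] at hv
        obtain ⟨s, hs, hvs⟩ := List.mem_flatten.mp hv
        obtain ⟨w, hw, rfl⟩ := List.mem_map.mp hs
        exact hfD w (hmem w hw) v hvs
    have hinjφ : Set.InjOn φ (tuples C n) := by
      intro l₁ h₁ l₂ h₂ h
      have hm₁ := (mem_tuples.mp h₁).2
      have hm₂ := (mem_tuples.mp h₂).2
      apply hUDC l₁ l₂ hm₁ hm₂
      rw [← hprodφ l₁ hm₁, ← hprodφ l₂ hm₂, h]
    calc (Kraft r C) ^ n
        = ∑ l ∈ tuples C n, (r : ℝ) ^ (-(l.prod.length : ℤ)) :=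
          (sum_tuples_kraft hr0 C n).symm
      _ = ∑ l ∈ tuples C n, (r : ℝ) ^ (-((φ l).prod.length : ℤ)) := by
          apply Finset.sum_congr rfl
          intro l hl
          rw [hprodφ l (mem_tuples.mp hl).2]
      _ = ∑ m ∈ (tuples C n).image φ, (r : ℝ) ^ (-(m.prod.length : ℤ)) :=
          (Finset.sum_image (f := fun m : List (FreeMonoid A) => (r : ℝ) ^ (-(m.prod.length : ℤ)))
            (fun a ha b hb h => hinjφ ha hb h)).symm
      _ ≤ ∑ m ∈ (Finset.Icc n (n * M)).biUnion (tuples D),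
            (r : ℝ) ^ (-(m.prod.length : ℤ)) := by
          apply Finset.sum_le_sum_of_subset_of_nonneg
          · intro m hm
            obtain ⟨l, hl, rfl⟩ := Finset.mem_image.mp hm
            exact hmaps l hl
          · intro m _ _
            exact zpow_nonneg hrR.le _
      _ = ∑ k ∈ Finset.Icc n (n * M), ∑ m ∈ tuples D k, (r : ℝ) ^ (-(m.prod.length : ℤ)) := by
          apply Finset.sum_biUnion
          intro k₁ hk₁ k₂ hk₂ hne
          simp only [Function.onFun]
          rw [Finset.disjoint_left]
          intro m hm₁ hm₂
          exact hne (((mem_tuples.mp hm₁).1.symm.trans (mem_tuples.mp hm₂).1))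
      _ = ∑ k ∈ Finset.Icc n (n * M), (Kraft r D) ^ k := by
          apply Finset.sum_congr rfl
          intro k _
          exact sum_tuples_kraft hr0 D k
      _ ≤ ∑ k ∈ Finset.Icc n (n * M), (Kraft r D) ^ n := by
          apply Finset.sum_le_sum
          intro k hk
          exact pow_le_pow_of_le_one hKD_pos.le hKD1 (Finset.mem_Icc.mp hk).1
      _ = ((Finset.Icc n (n * M)).card : ℝ) * (Kraft r D) ^ n := by
          rw [Finset.sum_const, nsmul_eq_mul]
      _ ≤ (M : ℝ) * n * (Kraft r D) ^ n := by
          apply mul_le_mul_of_nonneg_right _ (pow_nonneg hKD_pos.le n)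
          rw [Nat.card_Icc]
          have hnm : n ≤ n * M := Nat.le_mul_of_pos_right n hM1
          have h1 : n * M + 1 - n ≤ n * M := by omega
          calc ((n * M + 1 - n : ℕ) : ℝ) ≤ ((n * M : ℕ) : ℝ) := by exact_mod_cast h1
            _ = (M : ℝ) * n := by push_cast; ring
  -- conclude
  rw [← div_le_one hKD_pos]
  apply le_one_of_pow_le_linear (div_nonneg (kraft_nonneg r C) hKD_pos.le)
  intro n hn
  rw [div_pow, div_le_iff₀ (pow_pos hKD_pos n)]
  calc (Kraft r C) ^ n ≤ (M : ℝ) * n * (Kraft r D) ^ n := key n hn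
    _ = (M : ℝ) * n * (Kraft r D) ^ n := rfl
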